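/- A word w over the alphabet {n, N, i, I} is the label-code of a nonempty binary tree (read left to right, labelling internal nodes by lowercase and leaves other than the leftmost by uppercase, with 'n'/'N' for nodes whose label rule applies and 'i'/'I' otherwise) if and only if: (i) w starts with 'n'; (ii) w ends with 'I'; (iii) w alternates lowercase and uppercase letters; (iv) every prefix u of w satisfies |u|_n + |u|_N ≥ |u|_i + |u|_I; and (v) |w|_n + |w|_N = |w|_i + |w|_I. Moreover this encoding is a bijection between binary trees with k carets and admissible words of length 2k. -/

import Mathlib

/-- The alphabet `{n, N, i, I}` used to encode binary trees. -/
inductive Letter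
  | n | N | i | I
deriving DecidableEq, Repr

/-- Uppercase letters are the leaf labels `N`, `I`. -/
def Letter.isUpper : Letter → Bool
  | .N => true
  | .I => true
  | _ => false

/-- Lowercase version of a letter. -/
def Letter.toLower : Letter → Letter
  | .N => .n
  | .I => .i
  | x => x

/-- Full binary trees: every internal node (caret) has exactly two children. -/
inductive BTree
  | leaf
  | node (l r : BTree)
deriving DecidableEq, Repr

/-- Number of carets (internal nodes). -/
def BTree.carets : BTree → ℕ
  | .leaf => 0
  | .node l r => l.carets + r.carets + 1

/-- Number of leaves. -/
def BTree.numLeaves : BTree → ℕ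
  | .leaf => 1
  | .node l r => l.numLeaves + r.numLeaves

/-- Encoding of a tree, reading labels left to right.  The boolean parameter
records whether the position of this subtree is of `N`-type (`true`) or
`I`-type (`false`): leaves get the corresponding uppercase letter, internal
nodes the corresponding lowercase letter, with the left subtree of a caret in
`N`-position and the right subtree in `I`-position. -/
def enc : BTree → Bool → List Letter
  | .leaf, b => [if b then .N else .I]
  | .node l r, b => enc l true ++ [if b then .n else .i] ++ enc r false

/-- The encoding word with the leftmost-leaf label `N` prepended (the word
`ψ_k(t)` of length `2k+1`). -/
def fullcode (t : BTree) : List Letter := enc t true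

/-- The encoding word of the paper: the leftmost leaf is not labelled, so the
word of a tree with `k` carets has length `2k`. -/
def code (t : BTree) : List Letter := (fullcode t).tail

/-- Admissibility conditions (i)–(v): starts with `n`, ends with `I`, alternates
lowercase and uppercase letters, every prefix has at least as many `n`,`N`'s as
`i`,`I`'s, and the total counts are equal. -/
def Admissible (w : List Letter) : Prop :=
  w.head? = some .n ∧
  w.getLast? = some .I ∧
  List.Chain' (fun a b => a.isUpper ≠ b.isUpper) w ∧
  (∀ u : List Letter, u <+: w →
    u.count Letter.i + u.count Letter.I ≤ u.count Letter.n + u.count Letter.N) ∧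
  w.count Letter.n + w.count Letter.N = w.count Letter.i + w.count Letter.I

/-! ### Auxiliary definitions -/

/-- Value of a letter: `n, N` count `+1`, `i, I` count `-1`. -/
def Letter.val : Letter → ℤ
  | .i => -1
  | .I => -1
  | _ => 1

/-- Balance of a word. -/
def bal (w : List Letter) : ℤ := (w.map Letter.val).sum

/-- Alternating case, starting with case `b` (`true` = uppercase). -/
def Alt : Bool → List Letter → Prop
  | _, [] => True
  | b, a :: rest => a.isUpper = b ∧ Alt (!b) rest

@[simp] lemma bal_nil : bal [] = 0 := rfl

@[simp] lemma bal_cons (a : Letter) (w : List Letter) : bal (a :: w) = a.val + bal w := by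
  simp [bal]

@[simp] lemma bal_append (u v : List Letter) : bal (u ++ v) = bal u + bal v := by
  simp [bal]

@[simp] lemma bal_singleton (a : Letter) : bal [a] = a.val := by simp

lemma val_cases (a : Letter) : a.val = 1 ∨ a.val = -1 := by cases a <;> simp [Letter.val]

lemma bal_count (w : List Letter) :
    bal w = ((w.count Letter.n + w.count Letter.N : ℕ) : ℤ)
      - ((w.count Letter.i + w.count Letter.I : ℕ) : ℤ) := by
  induction w with
  | nil => simp
  | cons a w ih =>
    cases a <;> simp [List.count_cons, ih, Letter.val] <;> push_cast <;> ring

lemma bal_parity (w : List Letter) : (2 : ℤ) ∣ (bal w - w.length) := by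
  induction w with
  | nil => simp
  | cons a w ih =>
    simp only [bal_cons, List.length_cons] at *
    cases a <;> simp only [Letter.val] <;> push_cast <;> omega

lemma alt_append {v : List Letter} :
    ∀ (u : List Letter) (b : Bool),
      Alt b (u ++ v) ↔ Alt b u ∧ Alt (if u.length % 2 = 0 then b else !b) v := by
  intro u
  induction u with
  | nil => simp [Alt]
  | cons a u ih =>
    intro b
    simp only [List.cons_append, Alt, List.length_cons, List.append_eq]
    rw [ih (!b)]
    rcases Nat.mod_two_eq_zero_or_one u.length with h | h <;>
      simp [h, Nat.add_mod, and_assoc]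

lemma alt_of_chain :
    ∀ (w : List Letter) (b : Bool),
      List.Chain' (fun a c => a.isUpper ≠ c.isUpper) w →
      (∀ a ∈ w.head?, a.isUpper = b) → Alt b w := by
  intro w
  induction w with
  | nil => intro b _ _; trivial
  | cons a w ih =>
    intro b hc hh
    have ha : a.isUpper = b := hh a rfl
    unfold List.Chain' at hc; rw [List.isChain_cons] at hc
    refine ⟨ha, ih (!b) hc.2 ?_⟩
    intro c hcw
    have := hc.1 c hcw
    rw [ha] at this
    simp only [ne_eq] at this
    cases b <;> cases h : c.isUpper <;> simp_all

lemma chain_of_alt :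
    ∀ (w : List Letter) (b : Bool), Alt b w →
      List.Chain' (fun a c => a.isUpper ≠ c.isUpper) w ∧ (∀ a ∈ w.head?, a.isUpper = b) := by
  intro w
  induction w with
  | nil => intro b _; exact ⟨List.isChain_nil, by simp⟩
  | cons a w ih =>
    intro b ⟨ha, hw⟩
    obtain ⟨hc, hh⟩ := ih (!b) hw
    constructor
    · unfold List.Chain'; rw [List.isChain_cons]
      refine ⟨?_, hc⟩
      intro c hcw
      have := hh c hcw
      rw [ha, this]
      cases b <;> simp
    · intro c hcw
      simp only [List.head?_cons, Option.mem_def, Option.some.injEq] at hcw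
      subst hcw; exact ha

lemma prefix_append_cases :
    ∀ (a u b : List Letter), u <+: a ++ b → u <+: a ∨ ∃ v, v <+: b ∧ u = a ++ v := by
  intro a
  induction a with
  | nil => intro u b h; exact Or.inr ⟨u, h, rfl⟩
  | cons x a ih =>
    intro u b h
    rcases u with _ | ⟨y, u⟩
    · exact Or.inl (List.nil_prefix)
    · rw [List.cons_append, List.cons_prefix_cons] at h
      obtain ⟨rfl, h⟩ := h
      rcases ih u b h with h1 | ⟨v, hv, rfl⟩
      · exact Or.inl (List.cons_prefix_cons.mpr ⟨rfl, h1⟩)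
      · exact Or.inr ⟨v, hv, rfl⟩
/-! ### Forward lemmas about `enc` -/

lemma enc_ne_nil (t : BTree) (b : Bool) : enc t b ≠ [] := by
  cases t <;> simp [enc]

lemma length_enc (t : BTree) : ∀ b, (enc t b).length = 2 * t.carets + 1 := by
  induction t with
  | leaf => intro b; simp [enc, BTree.carets]
  | node l r ihl ihr =>
    intro b
    simp [enc, BTree.carets, ihl, ihr]
    ring

lemma head?_enc_true (t : BTree) : (enc t true).head? = some .N := by
  induction t with
  | leaf => simp [enc]
  | node l r ihl _ =>
    simp [enc, List.head?_append, ihl]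

lemma fullcode_eq (t : BTree) : enc t true = .N :: code t := by
  have h := head?_enc_true t
  rcases he : enc t true with _ | ⟨a, w⟩
  · rw [he] at h; simp at h
  · rw [he] at h
    simp only [List.head?_cons, Option.some.injEq] at h
    subst h
    simp [code, fullcode, he]

lemma length_code (t : BTree) : (code t).length = 2 * t.carets := by
  have h := length_enc t true
  rw [fullcode_eq t] at h
  simpa using h

lemma getLast?_enc_false (t : BTree) : (enc t false).getLast? = some .I := by
  induction t with
  | leaf => simp [enc]
  | node l r _ ihr =>
    rw [enc, List.getLast?_append, ihr]
    rfl

lemma bal_enc (t : BTree) : ∀ b, bal (enc t b) = if b then 1 else -1 := by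
  induction t with
  | leaf => intro b; cases b <;> simp [enc, Letter.val]
  | node l r ihl ihr =>
    intro b
    cases b <;> simp [enc, ihl, ihr, Letter.val]

lemma bal_code (t : BTree) : bal (code t) = 0 := by
  have h := bal_enc t true
  rw [fullcode_eq t] at h
  simp [Letter.val] at h
  linarith

lemma alt_enc (t : BTree) : ∀ b, Alt true (enc t b) := by
  induction t with
  | leaf => intro b; cases b <;> exact ⟨rfl, trivial⟩
  | node l r ihl ihr =>
    intro b
    have hlen : (enc l true).length % 2 = 1 := by
      rw [length_enc]; omega
    rw [enc, List.append_assoc, List.singleton_append, alt_append, hlen]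
    refine ⟨ihl true, ?_⟩
    rw [if_neg (by omega)]
    refine ⟨?_, ?_⟩
    · cases b <;> rfl
    · simpa using ihr false

lemma alt_code (t : BTree) : Alt false (code t) := by
  have h := alt_enc t true
  rw [fullcode_eq t] at h
  exact h.2

lemma prefix_singleton {u : List Letter} {a : Letter} (h : u <+: [a]) : u = [] ∨ u = [a] := by
  rcases u with _ | ⟨x, u⟩
  · exact Or.inl rfl
  · obtain ⟨s, hs⟩ := h
    right
    simp only [List.cons_append] at hs
    injection hs with h1 h2
    subst h1
    have : u = [] ∧ s = [] := by
      constructor <;> [skip; skip] <;> cases u <;> cases s <;> simp_all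
    simp [this.1]

/-- Prefix balance facts. -/
lemma prefix_bal (t : BTree) :
    (∀ u, u <+: enc t true → u ≠ [] → 1 ≤ bal u) ∧
    (∀ u, u <+: enc t false → u ≠ enc t false → 0 ≤ bal u) := by
  induction t with
  | leaf =>
    constructor
    · intro u hu hne
      rcases prefix_singleton hu with rfl | rfl
      · exact absurd rfl hne
      · simp [Letter.val]
    · intro u hu hne
      rcases prefix_singleton hu with rfl | rfl
      · simp
      · exact absurd rfl hne
  | node l r ihl ihr =>
    have key : ∀ b : Bool, ∀ u, u <+: enc (BTree.node l r) b → u ≠ [] →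
        u ≠ enc (BTree.node l r) b → (if b then 1 else 0 : ℤ) ≤ bal u := by
      intro b u hu hne hnf
      rw [enc, List.append_assoc, List.singleton_append] at hu
      rcases prefix_append_cases _ _ _ hu with h1 | ⟨v, hv, rfl⟩
      · have h1' := ihl.1 u h1 hne
        cases b <;> simp <;> linarith
      · rcases v with _ | ⟨x, v⟩
        · have := ihl.1 (enc l true) (List.prefix_refl _) (enc_ne_nil l true)
          simp only [List.append_nil]
          cases b <;> simp <;> linarith
        · obtain ⟨s, hs⟩ := hv
          injection hs with hx hs
          subst hx
          have hv' : v <+: enc r false := ⟨s, hs⟩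
          have hl := ihl.1 (enc l true) (List.prefix_refl _) (enc_ne_nil l true)
          have hbx : (if b then Letter.n else Letter.i).val = if b then 1 else -1 := by
            cases b <;> rfl
          have hvfull : v ≠ enc r false := by
            intro hveq
            apply hnf
            rw [enc, List.append_assoc, List.singleton_append, hveq]
          have hvb := ihr.2 v hv' hvfull
          simp only [bal_append, bal_cons, hbx]
          cases b <;> simp <;> linarith
    constructor
    · intro u hu hne
      by_cases hf : u = enc (BTree.node l r) true
      · subst hf
        have := bal_enc (BTree.node l r) true
        simp at this
        omega
      · have := key true u hu hne hf
        simpa using this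
    · intro u hu hnf
      by_cases h : u = []
      · subst h; simp
      · have := key false u hu h hnf
        simpa using this

lemma code_prefix_bal (t : BTree) : ∀ u, u <+: code t → 0 ≤ bal u := by
  intro u hu
  by_cases h : u = []
  · subst h; simp
  · have h2 : Letter.N :: u <+: enc t true := by
      rw [fullcode_eq t]
      exact List.cons_prefix_cons.mpr ⟨rfl, hu⟩
    have := (prefix_bal t).1 _ h2 (by simp)
    simp only [bal_cons] at this
    have hval : Letter.N.val = 1 := rfl
    linarith
/-! ### The admissibility predicate, reformulated -/

def AdmC (w : List Letter) : Prop :=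
  Alt false w ∧ (∀ u, u <+: w → 0 ≤ bal u) ∧ bal w = 0

def AdmF (w : List Letter) : Prop :=
  Alt true w ∧ (∀ u, u <+: w → u ≠ w → 0 ≤ bal u) ∧ bal w = -1

lemma count_le_iff_bal {u : List Letter} :
    (u.count Letter.i + u.count Letter.I ≤ u.count Letter.n + u.count Letter.N)
      ↔ 0 ≤ bal u := by
  rw [bal_count]
  push_cast
  omega

lemma admissible_iff (w : List Letter) : Admissible w ↔ AdmC w ∧ w ≠ [] := by
  constructor
  · rintro ⟨hh, _hl, hc, hp, ht⟩
    have hne : w ≠ [] := by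
      intro h; subst h; simp at hh
    refine ⟨⟨?_, ?_, ?_⟩, hne⟩
    · apply alt_of_chain _ _ hc
      intro a ha
      rw [hh] at ha
      simp only [Option.mem_def, Option.some.injEq] at ha
      subst ha; rfl
    · intro u hu
      exact count_le_iff_bal.mp (hp u hu)
    · rw [bal_count]
      push_cast
      omega
  · rintro ⟨⟨halt, hp, hb⟩, hne⟩
    obtain ⟨hc, hh⟩ := chain_of_alt w false halt
    rcases w with _ | ⟨a, rest⟩
    · exact absurd rfl hne
    have ha : a.isUpper = false := hh a rfl
    have hpa : (0:ℤ) ≤ bal [a] := hp [a] ⟨rest, rfl⟩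
    have han : a = Letter.n := by
      cases a <;> simp_all [Letter.val, Letter.isUpper]
    subst han
    set w := Letter.n :: rest with hw
    have hne' : w ≠ [] := by simp [hw]
    have hlast : w.getLast hne' = Letter.I := by
      have hsplit : w.dropLast ++ [w.getLast hne'] = w := List.dropLast_append_getLast hne'
      have hbd : 0 ≤ bal w.dropLast := hp _ (List.dropLast_prefix w)
      have hbw : bal w.dropLast + (w.getLast hne').val = 0 := by
        have := congrArg bal hsplit
        simp only [bal_append, bal_singleton] at this
        omega
      have hval : (w.getLast hne').val = -1 := by
        rcases val_cases (w.getLast hne') with h | h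
        · exfalso; omega
        · exact h
      -- parity: |w| is even, so last letter is uppercase
      have hpar := bal_parity w
      rw [hb] at hpar
      have hlen : w.length % 2 = 0 := by omega
      have hld : w.dropLast.length = w.length - 1 := List.length_dropLast
      have hlen2 : w.dropLast.length % 2 = 1 := by
        have : 0 < w.length := by simp [hw]
        omega
      have halt2 : Alt false (w.dropLast ++ [w.getLast hne']) := by rw [hsplit]; exact halt
      rw [alt_append, hlen2] at halt2
      rw [if_neg (by omega)] at halt2
      have hup : (w.getLast hne').isUpper = true := halt2.2.1
      cases h : w.getLast hne' <;> rw [h] at hval hup <;> simp_all [Letter.val, Letter.isUpper]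
    refine ⟨rfl, ?_, hc, ?_, ?_⟩
    · rw [List.getLast?_eq_getLast hne', hlast]
    · intro u hu
      exact count_le_iff_bal.mpr (hp u hu)
    · have := hb
      rw [bal_count] at this
      push_cast at this
      omega

lemma code_ne_nil_of_ne_leaf {t : BTree} (h : t ≠ .leaf) : code t ≠ [] := by
  intro hc
  have := length_code t
  rw [hc] at this
  cases t with
  | leaf => exact h rfl
  | node l r => simp [BTree.carets] at this

lemma admC_code (t : BTree) : AdmC (code t) :=
  ⟨alt_code t, code_prefix_bal t, bal_code t⟩

lemma admF_enc (t : BTree) : AdmF (enc t false) :=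
  ⟨alt_enc t false, fun u hu hne => (prefix_bal t).2 u hu hne, by simpa using bal_enc t false⟩

lemma admissible_code {t : BTree} (h : t ≠ .leaf) : Admissible (code t) :=
  (admissible_iff _).mpr ⟨admC_code t, code_ne_nil_of_ne_leaf h⟩
/-! ### Decomposition identities and return-point characterizations -/

lemma code_node (l r : BTree) : code (BTree.node l r) = code l ++ .n :: enc r false := by
  rw [code, fullcode, enc, fullcode_eq l]
  simp

lemma enc_node_false (l r : BTree) :
    enc (BTree.node l r) false = .N :: (code l ++ .i :: enc r false) := by
  rw [enc, fullcode_eq l]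
  simp

lemma take_long_append {a b : List Letter} {m : ℕ} (h : a.length ≤ m) :
    (a ++ b).take m = a ++ b.take (m - a.length) := by
  rw [List.take_append, List.take_of_length_le h]

/-- In `code (node l r)`, the last return to balance `0` (before the end) is
exactly at position `(code l).length`. -/
lemma lastReturn_code (l r : BTree) :
    bal ((code (BTree.node l r)).take (code l).length) = 0 ∧
    (code l).length + 1 < (code (BTree.node l r)).length ∧
    (∀ m, (code l).length < m → m < (code (BTree.node l r)).length →
      bal ((code (BTree.node l r)).take m) ≠ 0) := by
  set w := code (BTree.node l r) with hw
  have hdecomp : w = code l ++ .n :: enc r false := code_node l r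
  have hlen : w.length = (code l).length + 1 + (enc r false).length := by
    rw [hdecomp]; simp; omega
  refine ⟨?_, ?_, ?_⟩
  · rw [hdecomp, List.take_left]
    exact bal_code l
  · have := length_enc r false
    omega
  · intro m h1 h2
    rw [hdecomp, take_long_append (by omega)]
    have hm1 : m - (code l).length = (m - (code l).length - 1) + 1 := by omega
    rw [hm1, List.take_succ_cons]
    set k := m - (code l).length - 1 with hk
    have hkprefix : (enc r false).take k <+: enc r false := List.take_prefix _ _
    have hkne : (enc r false).take k ≠ enc r false := by
      intro h
      have := congrArg List.length h
      rw [List.length_take] at this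
      omega
    have := (prefix_bal r).2 _ hkprefix hkne
    have hbcl := bal_code l
    simp only [bal_append, bal_cons]
    have : (0:ℤ) ≤ bal ((enc r false).take k) := this
    have hvn : Letter.n.val = 1 := rfl
    omega

/-- In `enc (node l r) false`, the first return to balance `0` is exactly at
position `(code l).length + 2`. -/
lemma firstReturn_enc (l r : BTree) :
    bal ((enc (BTree.node l r) false).take ((code l).length + 2)) = 0 ∧
    (code l).length + 2 < (enc (BTree.node l r) false).length ∧
    (∀ m, 0 < m → m < (code l).length + 2 →
      bal ((enc (BTree.node l r) false).take m) ≠ 0) := by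
  set w := enc (BTree.node l r) false with hw
  have hdecomp : w = .N :: (code l ++ .i :: enc r false) := enc_node_false l r
  have hvN : Letter.N.val = 1 := rfl
  have hvi : Letter.i.val = -1 := rfl
  refine ⟨?_, ?_, ?_⟩
  · rw [hdecomp, List.take_succ_cons, take_long_append (by omega)]
    have h1 : (code l).length + 2 - 1 - (code l).length = 1 := by omega
    rw [show (code l).length + 2 - 1 = (code l).length + 1 from by omega] at * <;>
      skip
    rw [show (code l).length + 1 - (code l).length = 1 from by omega]
    simp only [List.take_succ_cons, List.take_zero, bal_cons, bal_append]
    have := bal_code l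
    simp only [bal_cons, bal_nil]
    omega
  · rw [hdecomp]
    have := length_enc r false
    simp
    omega
  · intro m h1 h2
    rw [hdecomp]
    have hm : m = (m - 1) + 1 := by omega
    rw [hm, List.take_succ_cons, List.take_append_of_le_length (by omega)]
    have hpre : (code l).take (m-1) <+: code l := List.take_prefix _ _
    have hge := code_prefix_bal l _ hpre
    simp only [bal_cons]
    omega

lemma head?_enc_node_false (l r : BTree) :
    (enc (BTree.node l r) false).head? = some .N := by
  rw [enc_node_false]; rfl

/-! ### Injectivity -/

lemma code_enc_inj : ∀ t t' : BTree,
    (code t = code t' → t = t') ∧ (enc t false = enc t' false → t = t') := by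
  intro t
  induction t with
  | leaf =>
    intro t'
    constructor
    · intro h
      cases t' with
      | leaf => rfl
      | node l r =>
        exfalso
        apply code_ne_nil_of_ne_leaf (t := BTree.node l r) (by simp)
        rw [← h]; rfl
    · intro h
      cases t' with
      | leaf => rfl
      | node l r =>
        exfalso
        have h2 := head?_enc_node_false l r
        rw [← h] at h2
        simp [enc] at h2
  | node l r ihl ihr =>
    intro t'
    have hleaf : ∀ h : code (BTree.node l r) = code BTree.leaf ∨
        enc (BTree.node l r) false = enc BTree.leaf false, True := fun _ => trivial
    constructor
    · intro h
      cases t' with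
      | leaf =>
        exfalso
        apply code_ne_nil_of_ne_leaf (t := BTree.node l r) (by simp)
        rw [h]; rfl
      | node l' r' =>
        -- equal last-return positions
        have c1 := lastReturn_code l r
        have c2 := lastReturn_code l' r'
        rw [← h] at c2
        have hlen : (code l).length = (code l').length := by
          by_contra hne
          rcases Nat.lt_or_ge (code l).length (code l').length with hlt | hge
          · exact c1.2.2 _ hlt (by omega) c2.1
          · have hlt : (code l').length < (code l).length := by omega
            exact c2.2.2 _ hlt (by omega) c1.1
        have hd1 : code (BTree.node l r) = code l ++ .n :: enc r false := code_node l r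
        have hd2 : code (BTree.node l' r') = code l' ++ .n :: enc r' false := code_node l' r'
        rw [← h, hd1] at hd2
        have hcl : code l = code l' := by
          have h1 : (code l ++ Letter.n :: enc r false).take (code l).length = code l :=
            List.take_left
          have h2 : (code l' ++ Letter.n :: enc r' false).take (code l').length = code l' :=
            List.take_left
          rw [← hd2, ← hlen, h1] at h2
          exact h2
        have hrest : enc r false = enc r' false := by
          have := hd2
          rw [hcl] at this
          have h3 := List.append_cancel_left this
          injection h3
        rw [(ihl l').1 hcl, (ihr r').2 hrest]
    · intro h
      cases t' with
      | leaf =>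
        exfalso
        have h2 := head?_enc_node_false l r
        rw [h] at h2
        simp [enc] at h2
      | node l' r' =>
        have c1 := firstReturn_enc l r
        have c2 := firstReturn_enc l' r'
        rw [← h] at c2
        have hlen : (code l).length = (code l').length := by
          by_contra hne
          rcases Nat.lt_or_ge (code l).length (code l').length with hlt | hge
          · exact c2.2.2 _ (by omega) (by omega) c1.1
          · exact c1.2.2 _ (by omega) (by omega) c2.1
        have hd1 : enc (BTree.node l r) false = .N :: (code l ++ .i :: enc r false) :=
          enc_node_false l r
        have hd2 : enc (BTree.node l' r') false = .N :: (code l' ++ .i :: enc r' false) :=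
          enc_node_false l' r'
        rw [← h, hd1] at hd2
        have hd3 : code l ++ .i :: enc r false = code l' ++ .i :: enc r' false := by
          injection hd2
        have hcl : code l = code l' := by
          have h1 : (code l ++ Letter.i :: enc r false).take (code l).length = code l :=
            List.take_left
          have h2 : (code l' ++ Letter.i :: enc r' false).take (code l').length = code l' :=
            List.take_left
          rw [← hd3, ← hlen, h1] at h2
          exact h2
        have hrest : enc r false = enc r' false := by
          rw [hcl] at hd3
          have h3 := List.append_cancel_left hd3
          injection h3
        rw [(ihl l').1 hcl, (ihr r').2 hrest]
/-! ### Parsing: every admissible word is a code -/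

lemma take_eq_of_prefix {u w : List Letter} (h : u <+: w) : w.take u.length = u :=
  (List.prefix_iff_eq_take.mp h).symm

lemma parse_exists : ∀ (n : ℕ) (w : List Letter), w.length ≤ n →
    (AdmC w → ∃ t, code t = w) ∧ (AdmF w → ∃ t, enc t false = w) := by
  intro n
  induction n with
  | zero =>
    intro w hw
    have hnil : w = [] := List.length_eq_zero_iff.mp (Nat.le_zero.mp hw)
    subst hnil
    constructor
    · intro _; exact ⟨BTree.leaf, rfl⟩
    · rintro ⟨_, _, hb⟩; simp at hb
  | succ n ih =>
    intro w hw
    constructor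
    · -- AdmC case
      rintro ⟨halt, hp, hb⟩
      rcases List.eq_nil_or_concat' w with rfl | hne
      · exact ⟨BTree.leaf, rfl⟩
      have hwne : w ≠ [] := by rcases hne with ⟨l, a, rfl⟩; simp
      have hwpos : 0 < w.length := List.length_pos_iff.mpr hwne
      set P : ℕ → Prop := fun m => m < w.length ∧ bal (w.take m) = 0 with hP
      have hPdec : DecidablePred P := fun m => by unfold P; infer_instance
      set j := Nat.findGreatest P w.length with hj
      have hP0 : P 0 := ⟨hwpos, by simp⟩
      have hPj : P j := Nat.findGreatest_spec (Nat.zero_le _) hP0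
      have hgreat : ∀ m, j < m → m ≤ w.length → ¬ P m :=
        fun m hm hm2 => Nat.findGreatest_is_greatest hm hm2
      obtain ⟨hjlt, hbalj⟩ := hPj
      have hdrop : w.drop j = w[j] :: w.drop (j+1) := List.drop_eq_getElem_cons hjlt
      set x := w[j] with hx
      have hsplit : w = w.take j ++ x :: w.drop (j+1) := by
        conv_lhs => rw [← List.take_append_drop j w]
        rw [hdrop]
      have hlentake : (w.take j).length = j := by
        simp [List.length_take]; omega
      have htake1 : w.take (j+1) = w.take j ++ [x] := by
        conv_lhs => rw [hsplit]
        rw [take_long_append (by omega)]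
        rw [hlentake]
        simp
      have hbal1 : bal (w.take (j+1)) = x.val := by
        rw [htake1]; simp [hbalj]
      have hjlt1 : j + 1 < w.length := by
        rcases Nat.lt_or_ge (j+1) w.length with h | h
        · exact h
        · exfalso
          have : w.take (j+1) = w := List.take_of_length_le (by omega)
          rw [this, hb] at hbal1
          rcases val_cases x with h' | h' <;> omega
      have hbne : bal (w.take (j+1)) ≠ 0 := by
        intro h0
        exact hgreat (j+1) (by omega) (by omega) ⟨hjlt1, h0⟩
      have hbge : 0 ≤ bal (w.take (j+1)) := hp _ (List.take_prefix _ _)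
      have hxval : x.val = 1 := by
        rcases val_cases x with h | h
        · exact h
        · rw [hbal1, h] at hbne hbge; omega
      -- j is even
      have hjeven : j % 2 = 0 := by
        have := bal_parity (w.take j)
        rw [hbalj, hlentake] at this
        omega
      -- x is lowercase, so x = n
      have haltd : Alt false (w.drop j) := by
        have := halt
        conv at this => rw [← List.take_append_drop j w]
        rw [alt_append] at this
        rw [hlentake] at this
        rcases this with ⟨_, h2⟩
        rwa [if_pos hjeven] at h2
      have hxn : x = Letter.n := by
        rw [hdrop] at haltd
        have hup : x.isUpper = false := haltd.1
        cases hc : x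
        · rfl
        · rw [hc] at hup; exact absurd hup (by simp [Letter.isUpper])
        · rw [hc] at hxval; exact absurd hxval (by simp [Letter.val])
        · rw [hc] at hup; exact absurd hup (by simp [Letter.isUpper])
      -- the two pieces
      set C := w.take j with hC
      set F := w.drop (j+1) with hF
      have hAdmC : AdmC C := by
        refine ⟨?_, ?_, hbalj⟩
        · have := halt
          conv at this => rw [← List.take_append_drop j w]
          rw [alt_append] at this
          exact this.1
        · intro u hu
          exact hp u (hu.trans (List.take_prefix _ _))
      have hbalF : bal F = -1 := by
        have := congrArg bal hsplit
        rw [bal_append, bal_cons, hbalj, hxval] at this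
        rw [hb] at this
        omega
      have hAdmF : AdmF F := by
        refine ⟨?_, ?_, hbalF⟩
        · have := halt
          conv at this => rw [hsplit]
          rw [show w.take j ++ x :: w.drop (j+1) = (w.take j ++ [x]) ++ F by simp [hF]] at this
          rw [alt_append] at this
          have hlen2 : (w.take j ++ [x]).length % 2 = 1 := by
            simp [hlentake]; omega
          rw [hlen2] at this
          rcases this with ⟨_, h2⟩
          rw [if_neg (by omega)] at h2
          simpa using h2
        · intro v hv hvne
          have hvlen : v.length < F.length := by
            rcases List.prefix_iff_eq_take.mp hv with h
            have := List.IsPrefix.length_le hv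
            rcases Nat.lt_or_ge v.length F.length with h' | h'
            · exact h'
            · exfalso; apply hvne
              rw [h, List.take_of_length_le h']
          have hFlen : F.length = w.length - (j+1) := by simp [hF]
          have hm : j + 1 + v.length < w.length := by omega
          have htakem : w.take (j + 1 + v.length) = (w.take j ++ [x]) ++ v := by
            conv_lhs => rw [hsplit]
            rw [show w.take j ++ x :: w.drop (j+1) = (w.take j ++ [x]) ++ F by simp [hF]]
            rw [take_long_append (by simp [hlentake]; omega)]
            congr 1
            have : j + 1 + v.length - (w.take j ++ [x]).length = v.length := by
              simp [hlentake]; omega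
            rw [this, take_eq_of_prefix hv]
          have hnz : bal (w.take (j + 1 + v.length)) ≠ 0 := by
            intro h0
            exact hgreat _ (by omega) (by omega) ⟨hm, h0⟩
          have hge : 0 ≤ bal (w.take (j + 1 + v.length)) := hp _ (List.take_prefix _ _)
          rw [htakem] at hnz hge
          simp only [bal_append, bal_singleton, hbalj, hxval] at hnz hge
          have : bal (w.take j) = 0 := hbalj
          omega
      have hClen : C.length ≤ n := by
        rw [hC, hlentake]; omega
      have hFlen : F.length ≤ n := by
        simp only [hF, List.length_drop]; omega
      obtain ⟨l, hl⟩ := (ih C hClen).1 hAdmC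
      obtain ⟨r, hr⟩ := (ih F hFlen).2 hAdmF
      refine ⟨BTree.node l r, ?_⟩
      rw [code_node, hl, hr, hxn] at *
      rw [hsplit]
    · -- AdmF case
      rintro ⟨halt, hp, hb⟩
      have hwne : w ≠ [] := by rintro rfl; simp at hb
      obtain ⟨a, rest, rfl⟩ := List.exists_cons_of_ne_nil hwne
      have ha : a.isUpper = true := halt.1
      rcases List.eq_nil_or_concat' rest with rfl | hrne
      · -- w = [a]
        have hval : a.val = -1 := by simpa using hb
        have haI : a = Letter.I := by
          cases hc : a
          · rw [hc] at ha; exact absurd ha (by simp [Letter.isUpper])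
          · rw [hc] at hval; exact absurd hval (by simp [Letter.val])
          · rw [hc] at ha; exact absurd ha (by simp [Letter.isUpper])
          · rfl
        exact ⟨BTree.leaf, by rw [haI]; rfl⟩
      have hrne' : rest ≠ [] := by rcases hrne with ⟨l, c, rfl⟩; simp
      set w := a :: rest with hwdef
      have hwlen : 2 ≤ w.length := by
        rcases List.exists_cons_of_ne_nil hrne' with ⟨b, rest', rfl⟩
        simp [hwdef]
      -- a = N
      have haval : a.val = 1 := by
        have h1 : [a] <+: w := ⟨rest, rfl⟩
        have h2 : [a] ≠ w := by
          intro h; rw [hwdef] at h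
          injection h with _ h'
          exact hrne' h'.symm
        have := hp [a] h1 h2
        rcases val_cases a with h | h
        · exact h
        · exfalso; rw [bal_singleton, h] at this; omega
      have haN : a = Letter.N := by
        cases hc : a
        · rw [hc] at ha; exact absurd ha (by simp [Letter.isUpper])
        · rfl
        · rw [hc] at ha; exact absurd ha (by simp [Letter.isUpper])
        · rw [hc] at haval; exact absurd haval (by simp [Letter.val])
      -- existence of a positive return to 0
      have hex : ∃ m, 0 < m ∧ bal (w.take m) = 0 := by
        refine ⟨w.length - 1, by omega, ?_⟩
        have hdl : w.dropLast = w.take (w.length - 1) := by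
          rw [List.dropLast_eq_take]
        have hsp : w.dropLast ++ [w.getLast hwne] = w := List.dropLast_append_getLast _
        have hbsp : bal w.dropLast + (w.getLast hwne).val = -1 := by
          have := congrArg bal hsp
          simp only [bal_append, bal_singleton] at this
          rw [hb] at this
          omega
        have hdlp : 0 ≤ bal w.dropLast := by
          apply hp _ (List.dropLast_prefix _)
          intro h
          have := congrArg List.length h
          rw [List.length_dropLast] at this
          omega
        have : (w.getLast hwne).val = -1 := by
          rcases val_cases (w.getLast hwne) with h | h
          · omega
          · exact h
        rw [← hdl]
        omega
      set P : ℕ → Prop := fun m => 0 < m ∧ bal (w.take m) = 0 with hP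
      have hPdec : DecidablePred P := fun m => by unfold P; infer_instance
      set j := Nat.find hex with hj
      have hPj : P j := Nat.find_spec hex
      have hmin : ∀ m, m < j → ¬ (0 < m ∧ bal (w.take m) = 0) := fun m hm => Nat.find_min hex hm
      obtain ⟨hjpos, hbalj⟩ := hPj
      have hjlt : j < w.length := by
        rcases Nat.lt_or_ge j w.length with h | h
        · exact h
        · exfalso
          rw [List.take_of_length_le (by omega), hb] at hbalj
          omega
      have hj1 : j ≠ 1 := by
        intro h1
        rw [h1] at hbalj
        rw [hwdef] at hbalj
        simp at hbalj
        omega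
      have hj2 : 2 ≤ j := by omega
      have hlentakej : (w.take j).length = j := by simp [List.length_take]; omega
      have hjeven : j % 2 = 0 := by
        have := bal_parity (w.take j)
        rw [hbalj, hlentakej] at this
        omega
      -- split off letter x at position j-1
      have hj1lt : j - 1 < w.length := by omega
      have hdrop : w.drop (j-1) = w[j-1] :: w.drop j := by
        have := List.drop_eq_getElem_cons hj1lt
        rw [show j - 1 + 1 = j by omega] at this
        exact this
      set x := w[j-1] with hx
      have hlentakej1 : (w.take (j-1)).length = j - 1 := by simp [List.length_take]; omega
      have hsplit : w = w.take (j-1) ++ x :: w.drop j := by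
        conv_lhs => rw [← List.take_append_drop (j-1) w]
        rw [hdrop]
      have htakej : w.take j = w.take (j-1) ++ [x] := by
        conv_lhs => rw [hsplit]
        rw [take_long_append (by omega)]
        rw [hlentakej1, show j - (j-1) = 1 by omega]
        simp
      -- C := rest.take (j-2)
      set C := rest.take (j-2) with hC
      have htakej1 : w.take (j-1) = Letter.N :: C := by
        rw [hwdef, show j - 1 = (j-2) + 1 by omega, List.take_succ_cons, haN, hC]
      -- balance facts
      have hbaltj1 : bal (w.take (j-1)) = 1 + bal C := by
        rw [htakej1]; simp [Letter.val]
      have hbaltj1nz : bal (w.take (j-1)) ≠ 0 := by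
        intro h0
        exact hmin (j-1) (by omega) ⟨by omega, h0⟩
      have hbaltj1ge : 0 ≤ bal (w.take (j-1)) := by
        apply hp _ (List.take_prefix _ _)
        intro h
        have := congrArg List.length h
        rw [hlentakej1] at this
        omega
      have hbalC : bal C = 0 ∧ x.val = -1 := by
        have h1 : bal (w.take j) = bal (w.take (j-1)) + x.val := by
          rw [htakej]; simp
        rcases val_cases x with h | h <;> constructor <;> omega
      -- x is lowercase (odd position), so x = i
      have hxi : x = Letter.i := by
        have := halt
        conv at this => rw [← List.take_append_drop (j-1) w]
        rw [alt_append, hlentakej1] at this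
        rw [if_neg (by omega)] at this
        rw [hdrop] at this
        have hup : x.isUpper = false := by simpa using this.2.1
        have hxv := hbalC.2
        cases hc : x
        · rw [hc] at hxv; exact absurd hxv (by simp [Letter.val])
        · rw [hc] at hup; exact absurd hup (by simp [Letter.isUpper])
        · rfl
        · rw [hc] at hup; exact absurd hup (by simp [Letter.isUpper])
      set F := w.drop j with hF
      have hAdmC : AdmC C := by
        refine ⟨?_, ?_, hbalC.1⟩
        · have := halt
          rw [hwdef] at this
          have haltrest : Alt false rest := this.2
          have := haltrest
          conv at this => rw [← List.take_append_drop (j-2) rest]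
          rw [alt_append] at this
          exact this.1
        · intro u hu
          have hulen : u.length ≤ j - 2 := by
            have h1 := List.IsPrefix.length_le hu
            have h2 : C.length ≤ j - 2 := by simp [hC, List.length_take]
            omega
          have hNu : w.take (1 + u.length) = Letter.N :: u := by
            rw [hwdef, show 1 + u.length = u.length + 1 by omega, List.take_succ_cons, haN]
            congr 1
            exact take_eq_of_prefix (hu.trans (List.take_prefix _ _))
          have hnz : bal (w.take (1 + u.length)) ≠ 0 := by
            intro h0
            exact hmin (1 + u.length) (by omega) ⟨by omega, h0⟩
          have hge : 0 ≤ bal (w.take (1 + u.length)) := by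
            apply hp _ (List.take_prefix _ _)
            intro h
            have := congrArg List.length h
            simp [List.length_take] at this
            omega
          rw [hNu] at hnz hge
          simp [Letter.val] at hnz hge
          omega
      have hbalF : bal F = -1 := by
        have := congrArg bal hsplit
        simp only [bal_append, bal_cons] at this
        rw [hb] at this
        have := hbalC
        omega
      have hAdmF : AdmF F := by
        refine ⟨?_, ?_, hbalF⟩
        · have := halt
          conv at this => rw [← List.take_append_drop j w]
          rw [alt_append, hlentakej] at this
          rw [if_pos hjeven] at this
          exact this.2
        · intro v hv hvne
          have hvlen : v.length < F.length := by
            have h1 := List.IsPrefix.length_le hv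
            rcases Nat.lt_or_ge v.length F.length with h' | h'
            · exact h'
            · exfalso; apply hvne
              rcases List.prefix_iff_eq_take.mp hv with h
              rw [h, List.take_of_length_le h']
          have hFlen : F.length = w.length - j := by simp [hF]
          have htakem : w.take (j + v.length) = w.take j ++ v := by
            conv_lhs => rw [← List.take_append_drop j w]
            rw [take_long_append (by omega)]
            congr 1
            rw [hlentakej, show j + v.length - j = v.length by omega, take_eq_of_prefix hv]
          have hge : 0 ≤ bal (w.take (j + v.length)) := by
            apply hp _ (List.take_prefix _ _)
            intro h
            have := congrArg List.length h
            simp [List.length_take] at this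
            omega
          rw [htakem] at hge
          simp only [bal_append, hbalj] at hge
          omega
      have hClen : C.length ≤ n := by
        have : C.length ≤ j - 2 := by simp [hC, List.length_take]
        omega
      have hFlen : F.length ≤ n := by
        simp only [hF, List.length_drop]
        omega
      obtain ⟨l, hl⟩ := (ih C hClen).1 hAdmC
      obtain ⟨r, hr⟩ := (ih F hFlen).2 hAdmF
      refine ⟨BTree.node l r, ?_⟩
      rw [enc_node_false, hl, hr, hxi] at *
      rw [hsplit, htakej1]
      simp
/-- A word encodes a nonempty binary tree iff it is admissible; moreover the
encoding is a bijection between binary trees with `k` carets and admissible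
words of length `2k`. -/
theorem code_admissible_bijection :
    (∀ w : List Letter, (∃ t : BTree, t ≠ .leaf ∧ code t = w) ↔ Admissible w) ∧
    (∀ k : ℕ, Set.BijOn code {t : BTree | t ≠ .leaf ∧ t.carets = k}
      {w : List Letter | Admissible w ∧ w.length = 2 * k}) := by
  have hiff : ∀ w : List Letter, (∃ t : BTree, t ≠ .leaf ∧ code t = w) ↔ Admissible w := by
    intro w
    constructor
    · rintro ⟨t, ht, rfl⟩
      exact admissible_code ht
    · intro hadm
      obtain ⟨hC, hne⟩ := (admissible_iff w).mp hadm
      obtain ⟨t, ht⟩ := (parse_exists w.length w le_rfl).1 hC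
      refine ⟨t, ?_, ht⟩
      intro hleaf
      subst hleaf
      rw [← ht] at hne
      exact hne rfl
  refine ⟨hiff, ?_⟩
  intro k
  refine ⟨?_, ?_, ?_⟩
  · rintro t ⟨ht, hk⟩
    refine ⟨admissible_code ht, ?_⟩
    rw [length_code, hk]
  · rintro t ⟨ht, _⟩ t' ⟨ht', _⟩ h
    exact (code_enc_inj t t').1 h
  · rintro w ⟨hadm, hlen⟩
    obtain ⟨t, ht, rfl⟩ := (hiff w).mpr hadm
    refine ⟨t, ⟨ht, ?_⟩, rfl⟩
    rw [length_code] at hlen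
    omega
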